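/- For every i ∈ {1,…,μ}, the composite (τ₁ ∘ τ₂ ∘ ⋯ ∘ τ_μ) applied to K_i equals K_i + ε·V_i. In particular the 'variation' (τ₁∘⋯∘τ_μ)(K_i) − K_i equals ε·V_i. -/
import Mathlib


/-- Picard–Lefschetz: for an adapted family `(K_i)` for the vanishing cycles
`(V_i)`, the composite of all Dehn twists sends `K_i` to `K_i + ε • V_i`. -/
theorem stmt_1 (R : Type) [CommRing R] (M : Type) [AddCommGroup M] [Module R M]
    (B : M →ₗ[R] M →ₗ[R] R) (ε : R) (μ : ℕ) (V K : Fin μ → M)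
    (τ : Fin μ → M → M)
    (hτ : ∀ i x, τ i x = x + (ε * B x (V i)) • V i)
    (h1 : ∀ i j : Fin μ, i < j → B (K j) (V i) = -(ε * B (V j) (V i)))
    (h2 : ∀ i j : Fin μ, j < i → B (K j) (V i) = 0)
    (h3 : ∀ j : Fin μ, B (K j) (V j) = 1) (i : Fin μ) :
    (List.ofFn τ).foldr (· ∘ ·) id (K i) = K i + ε • V i := by
  have key : ∀ m, m ≤ μ → ((List.finRange μ).drop (μ - m)).foldr (fun j y => τ j y) (K i)
      = if μ - m ≤ i.val then K i + ε • V i else K i := by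
    intro m
    induction m with
    | zero =>
      intro _
      rw [Nat.sub_zero, List.drop_eq_nil_of_le (by simp), if_neg (by omega)]
      rfl
    | succ m ih =>
      intro hm
      have hn : μ - (m + 1) < μ := by omega
      have hlen : μ - (m + 1) < (List.finRange μ).length := by simpa using hn
      rw [List.drop_eq_getElem_cons hlen]
      have hstep : μ - (m + 1) + 1 = μ - m := by omega
      rw [List.foldr_cons, hstep, ih (by omega)]
      have hget : (List.finRange μ)[μ - (m + 1)] = ⟨μ - (m + 1), hn⟩ := by
        apply Fin.ext; simp [List.getElem_finRange]
      rw [hget, hτ]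
      by_cases hlt : μ - (m + 1) < i.val
      · rw [if_pos (by omega), if_pos (by omega)]
        have hj : (⟨μ - (m + 1), hn⟩ : Fin μ) < i := hlt
        have hb := h1 ⟨μ - (m + 1), hn⟩ i hj
        have hz : ε * B (K i + ε • V i) (V ⟨μ - (m + 1), hn⟩) = 0 := by
          simp [hb, smul_eq_mul]
        rw [hz, zero_smul, add_zero]
      · by_cases heq : μ - (m + 1) = i.val
        · rw [if_neg (by omega), if_pos (by omega)]
          have hji : (⟨μ - (m + 1), hn⟩ : Fin μ) = i := Fin.ext heq
          rw [hji, h3, mul_one]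
        · rw [if_neg (by omega), if_neg (by omega)]
          have hj : i < (⟨μ - (m + 1), hn⟩ : Fin μ) := by
            simp only [Fin.lt_def]; omega
          rw [h2 ⟨μ - (m + 1), hn⟩ i hj, mul_zero, zero_smul, add_zero]
  have h0 := key μ le_rfl
  rw [Nat.sub_self, List.drop_zero, if_pos (Nat.zero_le _)] at h0
  have comp_apply : ∀ (l : List (M → M)) (x : M),
      l.foldr (· ∘ ·) id x = l.foldr (fun f y => f y) x := by
    intro l
    induction l with
    | nil => intro x; rfl
    | cons f t ih => intro x; simp [Function.comp, ih]
  rw [comp_apply, List.ofFn_eq_map, List.foldr_map]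
  exact h0
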